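/- If f : X → X is a supermixing map on a topological space X, then f^p is supermixing for every integer p ≥ 2. -/
import Mathlib

theorem stmt1 {X : Type*} [TopologicalSpace X] (f : X → X)
    (hf : ∀ U : Set X, IsOpen U → U.Nonempty → Dense (⋃ i : ℕ, ⋂ n ≥ i, f^[n] '' U))
    (p : ℕ) (hp : 2 ≤ p) :
    ∀ U : Set X, IsOpen U → U.Nonempty → Dense (⋃ i : ℕ, ⋂ n ≥ i, (f^[p])^[n] '' U) := by
  intro U hU hne
  apply (hf U hU hne).mono
  apply Set.iUnion_mono
  intro i x hx
  simp only [Set.mem_iInter] at hx ⊢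
  intro n hn
  rw [← Function.iterate_mul]
  exact hx (p * n) (le_trans hn (Nat.le_mul_of_pos_left n (by omega)))
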